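/- Let g : ℝ → ℝ be a continuous function which is differentiable at every t ≠ 0 and satisfies the differential equation g'(t) = -coth(t)·g(t) for all t ≠ 0, where coth(t) = cosh(t)/sinh(t). If g is bounded, then g is identically zero. -/

import Mathlib

/-- A bounded continuous function `g : ℝ → ℝ`, differentiable away from `0` with
`g' t = -coth t * g t` for `t ≠ 0`, vanishes identically. -/
theorem stmt_5 (g : ℝ → ℝ) (hcont : Continuous g)
    (hderiv : ∀ t : ℝ, t ≠ 0 →
      HasDerivAt g (-(Real.cosh t / Real.sinh t) * g t) t)
    (hbdd : ∃ C : ℝ, ∀ t : ℝ, |g t| ≤ C) :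
    ∀ t : ℝ, g t = 0 := by
  set h : ℝ → ℝ := fun t => g t * Real.sinh t with hh
  have hhcont : Continuous h := hcont.mul Real.continuous_sinh
  have hD : ∀ t : ℝ, t ≠ 0 → HasDerivAt h 0 t := by
    intro t ht
    have hs : Real.sinh t ≠ 0 := Real.sinh_ne_zero.mpr ht
    have := (hderiv t ht).mul (Real.hasDerivAt_sinh t)
    refine this.congr_deriv ?_
    field_simp
    ring
  have h0 : h 0 = 0 := by simp [hh]
  -- h is zero everywhere
  have hzero : ∀ t : ℝ, h t = 0 := by
    intro t
    rcases lt_trichotomy t 0 with htn | rfl | htp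
    · -- t < 0 : h x = h t on [t, -ε]
      have key : ∀ ε : ℝ, 0 < ε → ε < -t → h (-ε) = h t := by
        intro ε hε hεt
        have hle : t ≤ -ε := by linarith
        have := constant_of_has_deriv_right_zero
          (f := h) (a := t) (b := -ε) (hhcont.continuousOn)
          (fun x hx => by
            have hx0 : x ≠ 0 := by
              rcases hx with ⟨_, hx2⟩; intro h'; rw [h'] at hx2; linarith
            exact (hD x hx0).hasDerivWithinAt)
        exact this (-ε) ⟨hle, le_refl _⟩
      -- take ε → 0⁺
      have hlim : Filter.Tendsto (fun ε : ℝ => h (-ε)) (nhdsWithin 0 (Set.Ioi 0)) (nhds (h 0)) := by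
        have : Filter.Tendsto (fun ε : ℝ => -ε) (nhdsWithin 0 (Set.Ioi 0)) (nhds 0) := by
          have : Filter.Tendsto (fun ε : ℝ => -ε) (nhds 0) (nhds (-(0:ℝ))) := (continuous_neg.tendsto 0)
          simpa using this.mono_left nhdsWithin_le_nhds
        exact (hhcont.tendsto 0).comp this
      have heq : ∀ᶠ ε in nhdsWithin (0:ℝ) (Set.Ioi 0), h (-ε) = h t := by
        have hmem : Set.Ioo (0:ℝ) (-t) ∈ nhdsWithin (0:ℝ) (Set.Ioi 0) := by
          apply Ioo_mem_nhdsGT_of_mem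
          constructor <;> [exact le_refl 0; linarith]
        filter_upwards [hmem] with ε hε
        exact key ε hε.1 hε.2
      have : Filter.Tendsto (fun _ : ℝ => h t) (nhdsWithin 0 (Set.Ioi 0)) (nhds (h 0)) :=
        hlim.congr' heq
      have := tendsto_nhds_unique this tendsto_const_nhds
      rw [h0] at this; exact this.symm
    · exact h0
    · -- t > 0 : h t = h ε on [ε, t]
      have key : ∀ ε : ℝ, 0 < ε → ε < t → h t = h ε := by
        intro ε hε hεt
        have := constant_of_has_deriv_right_zero
          (f := h) (a := ε) (b := t) (hhcont.continuousOn)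
          (fun x hx => by
            have hx0 : x ≠ 0 := by
              rcases hx with ⟨hx1, _⟩; intro h'; rw [h'] at hx1; linarith
            exact (hD x hx0).hasDerivWithinAt)
        exact this t ⟨le_of_lt hεt, le_refl _⟩
      have hlim : Filter.Tendsto h (nhdsWithin 0 (Set.Ioi 0)) (nhds (h 0)) :=
        (hhcont.tendsto 0).mono_left nhdsWithin_le_nhds
      have heq : ∀ᶠ ε in nhdsWithin (0:ℝ) (Set.Ioi 0), h ε = h t := by
        have hmem : Set.Ioo (0:ℝ) t ∈ nhdsWithin (0:ℝ) (Set.Ioi 0) := by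
          apply Ioo_mem_nhdsGT_of_mem
          constructor <;> [exact le_refl 0; linarith]
        filter_upwards [hmem] with ε hε
        exact (key ε hε.1 hε.2).symm
      have : Filter.Tendsto (fun _ : ℝ => h t) (nhdsWithin 0 (Set.Ioi 0)) (nhds (h 0)) :=
        hlim.congr' heq
      have := tendsto_nhds_unique this tendsto_const_nhds
      rw [h0] at this; exact this.symm
  -- conclude g = 0
  intro t
  rcases eq_or_ne t 0 with rfl | ht
  · -- continuity: g 0 = lim g(1/n) ... use that g vanishes on t ≠ 0
    have hne : ∀ x ≠ (0:ℝ), g x = 0 := by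
      intro x hx
      have := hzero x
      have hs : Real.sinh x ≠ 0 := Real.sinh_ne_zero.mpr hx
      exact (mul_eq_zero.mp this).resolve_right hs
    have hlim : Filter.Tendsto g (nhdsWithin 0 (Set.Ioi 0)) (nhds (g 0)) :=
      (hcont.tendsto 0).mono_left nhdsWithin_le_nhds
    have heq : ∀ᶠ x in nhdsWithin (0:ℝ) (Set.Ioi 0), g x = 0 := by
      filter_upwards [self_mem_nhdsWithin] with x hx
      exact hne x (ne_of_gt hx)
    have : Filter.Tendsto (fun _ : ℝ => (0:ℝ)) (nhdsWithin 0 (Set.Ioi 0)) (nhds (g 0)) :=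
      hlim.congr' heq
    exact tendsto_nhds_unique this tendsto_const_nhds
  · have := hzero t
    have hs : Real.sinh t ≠ 0 := Real.sinh_ne_zero.mpr ht
    exact (mul_eq_zero.mp this).resolve_right hs
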